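/- Let N ≥ 2, k ≥ 0, and m ≥ 1 be integers. Suppose that m divides C(k+N−1, N−1) − 1, and that for every i with 1 ≤ i ≤ N−1, m divides WD((k, 1, …, 1, 0, …, 0)) − C(N, i), where the tuple has length N with i entries equal to 1 after the leading k. Then m divides x = (k+N)/gcd(k+N, lcm(1,2,…,N−1)). (In the paper this shows that the order x_ω of twisted-brane charges on SU(N), N odd, divides the untwisted order x.) -/

import Mathlib

/-- The Weyl dimension product of a tuple `ℓ = (ℓ_1, …, ℓ_N)` of integers:
`WD(ℓ) = ∏_{1 ≤ r < s ≤ N} (ℓ_r - ℓ_s + s - r) / (s - r)` as a rational number. -/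
def weylDim (N : ℕ) (ℓ : Fin N → ℤ) : ℚ :=
  ∏ r : Fin N, ∏ s : Fin N,
    if (r : ℕ) < (s : ℕ) then
      ((ℓ r - ℓ s + ((s : ℕ) : ℤ) - ((r : ℕ) : ℤ) : ℤ) : ℚ) / (((s : ℕ) - (r : ℕ) : ℕ) : ℚ)
    else 1

open Finset Nat


/-- Lucas-type fact: `p` does not divide `choose n (n % p^c)`. -/
lemma not_dvd_choose_mod_pow {p : ℕ} (hp : p.Prime) : ∀ (c n : ℕ), ¬ p ∣ Nat.choose n (n % p ^ c)
  | 0, n => by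
    simp only [pow_zero, Nat.mod_one, Nat.choose_zero_right, Nat.dvd_one]
    exact hp.one_lt.ne'
  | c + 1, n => by
    haveI : Fact p.Prime := ⟨hp⟩
    intro hdvd
    have hl := Choose.choose_modEq_choose_mod_mul_choose_div_nat (p := p) (n := n)
      (k := n % p ^ (c + 1))
    have h1 : n % p ^ (c + 1) % p = n % p :=
      Nat.mod_mod_of_dvd n (dvd_pow_self p (Nat.succ_ne_zero c))
    have h2 : n % p ^ (c + 1) / p = (n / p) % p ^ c := by
      rw [pow_succ']
      exact Nat.mod_mul_right_div_self n p (p ^ c)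
    rw [h1, h2, Nat.choose_self, one_mul] at hl
    have h0 : Nat.choose n (n % p ^ (c + 1)) ≡ 0 [MOD p] :=
      (Nat.modEq_zero_iff_dvd).2 hdvd
    exact not_dvd_choose_mod_pow hp c (n / p)
      ((Nat.modEq_zero_iff_dvd).1 (hl.symm.trans h0))

/-- If a prime power divides a finset lcm of nonzero naturals, it divides some element. -/
lemma exists_mem_of_pow_dvd_lcm {p c : ℕ} (hp : p.Prime) (hc : 1 ≤ c) :
    ∀ (S : Finset ℕ), (0 : ℕ) ∉ S → p ^ c ∣ S.lcm id → ∃ j ∈ S, p ^ c ∣ j := by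
  intro S
  induction S using Finset.induction_on with
  | empty =>
    intro _ h
    rw [Finset.lcm_empty] at h
    have h1 : p ^ c ≤ 1 := Nat.le_of_dvd one_pos h
    have h2 : 1 < p ^ c := Nat.one_lt_pow (by omega) hp.one_lt
    omega
  | @insert a S' _ ih =>
    intro h0 h
    have haz : a ≠ 0 := fun hz => h0 (hz ▸ Finset.mem_insert_self a S')
    have h0' : (0 : ℕ) ∉ S' := fun hz => h0 (Finset.mem_insert_of_mem hz)
    have hLz : S'.lcm id ≠ 0 := by
      intro hz
      rw [Finset.lcm_eq_zero_iff] at hz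
      obtain ⟨j, hj, hj0⟩ := hz
      simp only [id] at hj0
      subst hj0
      exact h0' (Finset.mem_coe.1 hj)
    rw [Finset.lcm_insert, id, lcm_eq_nat_lcm] at h
    have hlcmz : Nat.lcm a (S'.lcm id) ≠ 0 := Nat.lcm_ne_zero haz hLz
    have hle : c ≤ (Nat.lcm a (S'.lcm id)).factorization p :=
      (hp.pow_dvd_iff_le_factorization hlcmz).1 h
    rw [Nat.factorization_lcm haz hLz, Finsupp.sup_apply, le_sup_iff] at hle
    rcases hle with hle | hle
    · exact ⟨a, Finset.mem_insert_self a S',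
        (hp.pow_dvd_iff_le_factorization haz).2 hle⟩
    · obtain ⟨j, hj, hjd⟩ := ih h0' ((hp.pow_dvd_iff_le_factorization hLz).2 hle)
      exact ⟨j, Finset.mem_insert_of_mem hj, hjd⟩

lemma double_prod (N : ℕ) (F : ℕ → ℕ → ℚ) :
    (∏ r : Fin N, ∏ s : Fin N, F r s) = ∏ r ∈ range N, ∏ s ∈ range N, F r s := by
  rw [Fin.prod_univ_eq_prod_range (fun a => ∏ s : Fin N, F a s) N]
  exact Finset.prod_congr rfl fun r _ => Fin.prod_univ_eq_prod_range _ _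

lemma prod_ite_range (N r : ℕ) (f : ℕ → ℚ) :
    (∏ s ∈ range N, if r < s then f s else 1) = ∏ s ∈ Ico (r + 1) N, f s := by
  rw [show Ico (r+1) N = (range N).filter (fun s => r < s) by
    ext s; simp only [Finset.mem_filter, Finset.mem_range, Finset.mem_Ico]; omega,
    Finset.prod_filter]

lemma telescope_prod (r M : ℕ) (hrM : r < M) (N : ℕ) (hMN : M ≤ N) :
    (∏ s ∈ Ico M N, (((s : ℚ) + 1 - r) / ((s : ℚ) - r))) = ((N : ℚ) - r) / ((M : ℚ) - r) := by
  have hM : ((M : ℚ)) - r ≠ 0 := by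
    have : (r : ℚ) < (M : ℚ) := by exact_mod_cast hrM
    intro hz; rw [sub_eq_zero] at hz; rw [hz] at this; exact lt_irrefl _ this
  induction N, hMN using Nat.le_induction with
  | base => rw [Finset.Ico_self, Finset.prod_empty, div_self hM]
  | succ n hn ih =>
    rw [Finset.prod_Ico_succ_top hn, ih]
    have h1 : ((n : ℚ)) - r ≠ 0 := by
      have : (r : ℚ) < (n : ℚ) := by exact_mod_cast (by omega : r < n)
      intro hz; rw [sub_eq_zero] at hz; rw [hz] at this; exact lt_irrefl _ this
    push_cast
    field_simp

lemma prod_cast_asc (c : ℕ) : ∀ j : ℕ, (∏ t ∈ range j, ((c : ℚ) + t)) = (c.ascFactorial j : ℚ)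
  | 0 => by simp
  | j + 1 => by
    rw [Finset.prod_range_succ, prod_cast_asc c j, Nat.ascFactorial_succ]
    push_cast
    ring

lemma asc_concat (n a : ℕ) : ∀ b : ℕ,
    n.ascFactorial a * (n + a).ascFactorial b = n.ascFactorial (a + b)
  | 0 => by simp
  | b + 1 => by
    rw [Nat.ascFactorial_succ, show a + (b+1) = (a+b)+1 by omega, Nat.ascFactorial_succ,
      ← asc_concat n a b]
    ring

lemma nat_identity (N k i : ℕ) (hi1 : 1 ≤ i) (hiN : i ≤ N - 1) (hN : 2 ≤ N) :
    (k + i) * k.ascFactorial i * ((k + i + 1).ascFactorial (N - 1 - i)) *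
        ((N - 1).descFactorial i)
      = k * (N - 1).choose i * ((k + N - 1).choose (N - 1)) * i ! *
        ((i + 1).ascFactorial (N - 1 - i)) * i ! := by
  have e1 : k * (k + 1).ascFactorial i = (k + i) * k.ascFactorial i := by
    simpa using Nat.succ_ascFactorial k i
  have e2 : (k + 1).ascFactorial i * ((k + 1) + i).ascFactorial (N - 1 - i)
      = (k + 1).ascFactorial (i + (N - 1 - i)) := asc_concat (k + 1) i (N - 1 - i)
  have e3 : i + (N - 1 - i) = N - 1 := by omega
  have e4 : (k + 1).ascFactorial (N - 1) = (N - 1)! * (k + (N - 1)).choose (N - 1) :=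
    Nat.ascFactorial_eq_factorial_mul_choose k (N - 1)
  have e5 : k + (N - 1) = k + N - 1 := by omega
  have e6 : (i + 1).ascFactorial (N - 1 - i) = (N - 1 - i)! * (N - 1).choose (N - 1 - i) := by
    have := Nat.ascFactorial_eq_factorial_mul_choose i (N - 1 - i)
    rw [show i + (N - 1 - i) = N - 1 by omega] at this
    exact this
  have e6' : (N - 1).choose (N - 1 - i) = (N - 1).choose i := Nat.choose_symm hiN
  have e7 : (N - 1).descFactorial i = i ! * (N - 1).choose i :=
    Nat.descFactorial_eq_factorial_mul_choose _ _
  have e8 : (N - 1).choose i * i ! * (N - 1 - i)! = (N - 1)! :=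
    Nat.choose_mul_factorial_mul_factorial hiN
  calc (k + i) * k.ascFactorial i * ((k + i + 1).ascFactorial (N - 1 - i)) *
        ((N - 1).descFactorial i)
      = k * ((k + 1).ascFactorial i * ((k + 1) + i).ascFactorial (N - 1 - i)) *
          (i ! * (N - 1).choose i) := by
        rw [← e1, e7, show k + i + 1 = (k + 1) + i by omega]; ring
    _ = k * ((N - 1)! * (k + N - 1).choose (N - 1)) * (i ! * (N - 1).choose i) := by
        rw [e2, e3, e4, e5]
    _ = k * (N - 1).choose i * ((k + N - 1).choose (N - 1)) * i ! *
        ((i + 1).ascFactorial (N - 1 - i)) * i ! := by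
        rw [e6, e6', ← e8]; ring

lemma weylDim_eval (N k i : ℕ) (hN : 2 ≤ N) (hi1 : 1 ≤ i) (hiN : i ≤ N - 1) :
    ((k : ℚ) + i) *
        weylDim N (fun j => if (j : ℕ) = 0 then (k : ℤ) else if (j : ℕ) ≤ i then 1 else 0)
      = (k : ℚ) * (Nat.choose (N - 1) i : ℚ) * (Nat.choose (k + N - 1) (N - 1) : ℚ) := by
  set g : ℕ → ℤ := fun a => if a = 0 then (k : ℤ) else if a ≤ i then 1 else 0 with hgdef
  set f : ℕ → ℕ → ℚ :=
    fun r s => ((g r - g s + (s : ℤ) - (r : ℤ) : ℤ) : ℚ) / (((s - r : ℕ)) : ℚ) with hfdef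
  have hg0 : g 0 = (k : ℤ) := if_pos rfl
  have hg1 : ∀ s, 1 ≤ s → s ≤ i → g s = 1 := by
    intro s h1 h2
    simp only [hgdef]
    rw [if_neg (by omega), if_pos h2]
  have hg2 : ∀ s, i < s → g s = 0 := by
    intro s h1
    simp only [hgdef]
    rw [if_neg (by omega), if_neg (by omega)]
  -- step 1: rewrite as a product over ranges
  have hW : weylDim N (fun j => if (j : ℕ) = 0 then (k : ℤ) else if (j : ℕ) ≤ i then 1 else 0)
      = ∏ r ∈ range N, ∏ s ∈ Ico (r + 1) N, f r s := by
    rw [show weylDim N (fun j => if (j : ℕ) = 0 then (k : ℤ) else if (j : ℕ) ≤ i then 1 else 0)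
        = ∏ r : Fin N, ∏ s : Fin N, (if (r : ℕ) < (s : ℕ) then f (r : ℕ) (s : ℕ) else 1) from rfl,
      double_prod N (fun r s => if r < s then f r s else 1)]
    exact Finset.prod_congr rfl fun r _ => prod_ite_range N r (f r)
  -- step 2: outer product splitting
  have hsplit1 : (∏ r ∈ Ico 0 1, ∏ s ∈ Ico (r + 1) N, f r s) *
      (∏ r ∈ Ico 1 N, ∏ s ∈ Ico (r + 1) N, f r s)
      = ∏ r ∈ range N, ∏ s ∈ Ico (r + 1) N, f r s := by
    rw [Finset.range_eq_Ico]
    exact Finset.prod_Ico_consecutive _ (by omega) (by omega)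
  have hsplit2 : (∏ r ∈ Ico 1 (i + 1), ∏ s ∈ Ico (r + 1) N, f r s) *
      (∏ r ∈ Ico (i + 1) N, ∏ s ∈ Ico (r + 1) N, f r s)
      = ∏ r ∈ Ico 1 N, ∏ s ∈ Ico (r + 1) N, f r s :=
    Finset.prod_Ico_consecutive _ (by omega) (by omega)
  -- the r = 0 block
  have hsplit0 : (∏ s ∈ Ico 1 (i + 1), f 0 s) * (∏ s ∈ Ico (i + 1) N, f 0 s)
      = ∏ s ∈ Ico (0 + 1) N, f 0 s :=
    Finset.prod_Ico_consecutive _ (by omega) (by omega)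
  have hEA : (∏ s ∈ Ico 1 (i + 1), f 0 s) = ∏ s ∈ Ico 1 (i + 1), ((k : ℚ) + s - 1) / (s : ℚ) := by
    refine Finset.prod_congr rfl fun s hs => ?_
    rw [Finset.mem_Ico] at hs
    simp only [hfdef]
    rw [hg0, hg1 s hs.1 (by omega), Nat.sub_zero]
    push_cast
    ring_nf
  have hEB : (∏ s ∈ Ico (i + 1) N, f 0 s) = ∏ s ∈ Ico (i + 1) N, ((k : ℚ) + s) / (s : ℚ) := by
    refine Finset.prod_congr rfl fun s hs => ?_
    rw [Finset.mem_Ico] at hs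
    simp only [hfdef]
    rw [hg0, hg2 s (by omega), Nat.sub_zero]
    push_cast
    ring_nf
  -- the middle block 1 ≤ r ≤ i
  have hEC : (∏ r ∈ Ico 1 (i + 1), ∏ s ∈ Ico (r + 1) N, f r s)
      = ∏ r ∈ Ico 1 (i + 1), (((N : ℚ) - r) / ((i : ℚ) + 1 - r)) := by
    refine Finset.prod_congr rfl fun r hr => ?_
    rw [Finset.mem_Ico] at hr
    have hrN : r + 1 ≤ i + 1 := by omega
    have hiN' : i + 1 ≤ N := by omega
    rw [← Finset.prod_Ico_consecutive _ hrN hiN']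
    have hpart1 : (∏ s ∈ Ico (r + 1) (i + 1), f r s) = 1 := by
      apply Finset.prod_eq_one
      intro s hs
      rw [Finset.mem_Ico] at hs
      simp only [hfdef]
      rw [hg1 r hr.1 (by omega), hg1 s (by omega) (by omega)]
      have hrs : r ≤ s := by omega
      have hne : ((s : ℚ) - r) ≠ 0 := by
        have : (r : ℚ) < (s : ℚ) := by exact_mod_cast (by omega : r < s)
        intro hz; rw [sub_eq_zero] at hz; rw [hz] at this; exact lt_irrefl _ this
      rw [Nat.cast_sub hrs]
      push_cast
      rw [show (0 : ℚ) + (s : ℚ) - r = (s : ℚ) - r by ring, div_self hne]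
    have hpart2 : (∏ s ∈ Ico (i + 1) N, f r s)
        = ((N : ℚ) - r) / ((i : ℚ) + 1 - r) := by
      have := telescope_prod r (i + 1) (by omega) N hiN'
      push_cast at this
      rw [← this]
      refine Finset.prod_congr rfl fun s hs => ?_
      rw [Finset.mem_Ico] at hs
      simp only [hfdef]
      rw [hg1 r hr.1 (by omega), hg2 s (by omega), Nat.cast_sub (by omega : r ≤ s)]
      push_cast
      ring_nf
    rw [hpart1, hpart2, one_mul]
  -- the tail block r ≥ i+1 : all 1
  have hED : (∏ r ∈ Ico (i + 1) N, ∏ s ∈ Ico (r + 1) N, f r s) = 1 := by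
    apply Finset.prod_eq_one
    intro r hr
    rw [Finset.mem_Ico] at hr
    apply Finset.prod_eq_one
    intro s hs
    rw [Finset.mem_Ico] at hs
    simp only [hfdef]
    rw [hg2 r (by omega), hg2 s (by omega), Nat.cast_sub (by omega : r ≤ s)]
    have hne : ((s : ℚ) - r) ≠ 0 := by
      have : (r : ℚ) < (s : ℚ) := by exact_mod_cast (by omega : r < s)
      intro hz; rw [sub_eq_zero] at hz; rw [hz] at this; exact lt_irrefl _ this
    push_cast
    rw [show (0 : ℚ) + (s : ℚ) - r = (s : ℚ) - r by ring, div_self hne]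
  -- convert the three blocks into factorial quotients
  have hifact : ((i ! : ℚ)) ≠ 0 := Nat.cast_ne_zero.2 (Nat.factorial_ne_zero i)
  have hascpos : 0 < (i + 1).ascFactorial (N - 1 - i) := by
    rcases Nat.eq_zero_or_pos ((i + 1).ascFactorial (N - 1 - i)) with h0 | h0
    · exfalso
      have h := Nat.factorial_mul_ascFactorial i (N - 1 - i)
      rw [h0, Nat.mul_zero] at h
      exact (Nat.factorial_ne_zero _) h.symm
    · exact h0
  have hascne : (((i + 1).ascFactorial (N - 1 - i) : ℚ)) ≠ 0 :=
    Nat.cast_ne_zero.2 hascpos.ne'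
  have hA : (∏ s ∈ Ico 1 (i + 1), (((k : ℚ) + s - 1) / (s : ℚ)))
      = (k.ascFactorial i : ℚ) / (i ! : ℚ) := by
    rw [Finset.prod_div_distrib, Finset.prod_Ico_eq_prod_range, Finset.prod_Ico_eq_prod_range,
      show i + 1 - 1 = i from rfl]
    congr 1
    · rw [← prod_cast_asc k i]
      refine Finset.prod_congr rfl fun t _ => ?_
      push_cast; ring
    · rw [show ((i ! : ℚ)) = ((1 : ℕ).ascFactorial i : ℚ) by rw [Nat.one_ascFactorial],
        ← prod_cast_asc 1 i]
      refine Finset.prod_congr rfl fun t _ => ?_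
      push_cast; ring
  have hB : (∏ s ∈ Ico (i + 1) N, (((k : ℚ) + s) / (s : ℚ)))
      = ((k + i + 1).ascFactorial (N - 1 - i) : ℚ) / ((i + 1).ascFactorial (N - 1 - i) : ℚ) := by
    rw [Finset.prod_div_distrib, Finset.prod_Ico_eq_prod_range, Finset.prod_Ico_eq_prod_range,
      show N - (i + 1) = N - 1 - i by omega]
    congr 1
    · rw [← prod_cast_asc (k + i + 1) (N - 1 - i)]
      refine Finset.prod_congr rfl fun t _ => ?_
      push_cast; ring
    · rw [← prod_cast_asc (i + 1) (N - 1 - i)]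
      refine Finset.prod_congr rfl fun t _ => ?_
      push_cast; ring
  have hC : (∏ r ∈ Ico 1 (i + 1), (((N : ℚ) - r) / ((i : ℚ) + 1 - r)))
      = ((N - 1).descFactorial i : ℚ) / (i ! : ℚ) := by
    rw [Finset.prod_div_distrib, Finset.prod_Ico_eq_prod_range, Finset.prod_Ico_eq_prod_range,
      show i + 1 - 1 = i from rfl]
    congr 1
    · rw [Nat.descFactorial_eq_prod_range, Nat.cast_prod]
      refine Finset.prod_congr rfl fun t ht => ?_
      rw [Finset.mem_range] at ht
      rw [Nat.cast_sub (show t ≤ N - 1 by omega), Nat.cast_sub (show 1 ≤ N by omega)]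
      push_cast; ring
    · rw [show ((i ! : ℚ)) = (i.descFactorial i : ℚ) by rw [Nat.descFactorial_self],
        Nat.descFactorial_eq_prod_range, Nat.cast_prod]
      refine Finset.prod_congr rfl fun t ht => ?_
      rw [Finset.mem_range] at ht
      rw [Nat.cast_sub (show t ≤ i by omega)]
      push_cast; ring
  -- assemble
  have h01 : (∏ r ∈ Ico 0 1, ∏ s ∈ Ico (r + 1) N, f r s) = ∏ s ∈ Ico (0 + 1) N, f 0 s := by
    rw [Nat.Ico_zero_eq_range, Finset.prod_range_one]
  rw [hW, ← hsplit1, ← hsplit2, hED, mul_one, h01, ← hsplit0, hEA, hEB, hEC, hA, hB, hC]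
  have hq := nat_identity N k i hi1 hiN hN
  have hqQ : ((k : ℚ) + i) * (k.ascFactorial i : ℚ) * (((k + i + 1).ascFactorial (N - 1 - i)) : ℚ)
        * (((N - 1).descFactorial i) : ℚ)
      = (k : ℚ) * ((N - 1).choose i : ℚ) * (((k + N - 1).choose (N - 1)) : ℚ) * (i ! : ℚ)
        * (((i + 1).ascFactorial (N - 1 - i)) : ℚ) * (i ! : ℚ) := by
    exact_mod_cast congrArg (fun x : ℕ => (x : ℚ)) hq
  field_simp
  linear_combination hqQ

lemma stepA (p a N k : ℕ) (hp : p.Prime) (hN : 2 ≤ N) (ha : 1 ≤ a)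
    (h1 : (p : ℤ) ^ a ∣ (Nat.choose (k + N - 1) (N - 1) : ℤ) - 1)
    (h2 : ∀ i : ℕ, 1 ≤ i → i ≤ N - 1 →
      ((p : ℤ) ^ a * ((k : ℤ) + i)) ∣
        ((k : ℤ) * (Nat.choose (N - 1) i : ℤ) * (Nat.choose (k + N - 1) (N - 1) : ℤ)
          - ((k : ℤ) + i) * (Nat.choose N i : ℤ))) :
    ∀ s : ℕ, p ^ s ≤ N - 1 → p ^ (a + s) ∣ (k + N) := by
  set D : ℤ := (Nat.choose (k + N - 1) (N - 1) : ℤ) with hD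
  intro s
  induction s with
  | zero =>
    intro _
    have hi := h2 1 le_rfl (by omega)
    rw [Nat.choose_one_right, Nat.choose_one_right, Nat.cast_one] at hi
    have h3 : (p : ℤ) ^ a ∣ (k : ℤ) * ((N - 1 : ℕ) : ℤ) * D - ((k : ℤ) + 1) * (N : ℤ) :=
      dvd_trans (dvd_mul_right _ _) hi
    have h4 : (p : ℤ) ^ a ∣ (k : ℤ) * ((N - 1 : ℕ) : ℤ) * (D - 1) := Dvd.dvd.mul_left h1 _
    have h5 : (p : ℤ) ^ a ∣ ((k : ℤ) + (N : ℤ)) := by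
      have hsub := dvd_sub h4 h3
      have heq : (k : ℤ) * ((N - 1 : ℕ) : ℤ) * (D - 1)
          - ((k : ℤ) * ((N - 1 : ℕ) : ℤ) * D - ((k : ℤ) + 1) * (N : ℤ)) = (k : ℤ) + N := by
        rw [Nat.cast_sub (by omega : 1 ≤ N)]; push_cast; ring
      rwa [heq] at hsub
    have h6 : ((p ^ (a + 0) : ℕ) : ℤ) ∣ ((k + N : ℕ) : ℤ) := by push_cast [add_zero]; exact h5
    exact_mod_cast h6
  | succ s ih =>
    intro hs1
    have hps : p ^ s ≤ N - 1 := le_trans (Nat.pow_le_pow_right hp.pos s.le_succ) hs1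
    have hn : p ^ (a + s) ∣ (k + N) := ih hps
    obtain ⟨q, hq⟩ : ∃ q, q = p ^ (s + 1) := ⟨_, rfl⟩
    rw [← hq] at hs1
    obtain ⟨i, hi⟩ : ∃ i, i = (N - 1) % q + 1 := ⟨_, rfl⟩
    have hq0 : 0 < q := by rw [hq]; exact pow_pos hp.pos _
    have hiq : i ≤ q := by have := Nat.mod_lt (N - 1) hq0; omega
    have hi1 : 1 ≤ i := by omega
    have hiN : i ≤ N - 1 := le_trans hiq hs1
    have hqn : q ∣ (k + N) := by
      rw [hq]; exact dvd_trans (pow_dvd_pow p (by omega : s + 1 ≤ a + s)) hn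
    have hqNi : q ∣ (N - i) := by
      have heq : N - i = N - 1 - (N - 1) % q := by omega
      rw [heq]; exact Nat.dvd_sub_mod (N - 1)
    have hqNiZ : (q : ℤ) ∣ ((N : ℤ) - i) := by
      have hcast := Int.natCast_dvd_natCast.2 hqNi
      rwa [Nat.cast_sub (by omega : i ≤ N)] at hcast
    have hqnZ : (q : ℤ) ∣ ((k : ℤ) + N) := by exact_mod_cast Int.natCast_dvd_natCast.2 hqn
    have hqkiZ : (q : ℤ) ∣ ((k : ℤ) + i) := by
      have hsub := dvd_sub hqnZ hqNiZ
      rwa [show (k : ℤ) + N - ((N : ℤ) - i) = (k : ℤ) + i by ring] at hsub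
    obtain ⟨j, hij⟩ : ∃ j, i = j + 1 := ⟨i - 1, by omega⟩
    have hjq : j = (N - 1) % q := by omega
    have hP : (Nat.choose N i : ℤ)
        = (Nat.choose (N - 1) i : ℤ) + (Nat.choose (N - 1) j : ℤ) := by
      have hps2 := Nat.choose_succ_succ (N - 1) j
      simp only [Nat.succ_eq_add_one] at hps2
      rw [show N - 1 + 1 = N by omega, ← hij] at hps2
      rw [hps2]; push_cast; ring
    have hR : (i : ℤ) * (Nat.choose (N - 1) i : ℤ)
        = ((N : ℤ) - i) * (Nat.choose (N - 1) j : ℤ) := by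
      have hcr := Nat.choose_succ_right_eq (N - 1) j
      rw [← hij, show N - 1 - j = N - i by omega] at hcr
      have hcast := congrArg (fun x : ℕ => (x : ℤ)) hcr
      push_cast [Nat.cast_sub (by omega : i ≤ N)] at hcast
      linarith
    have hKey : ((k : ℤ) + N) * (Nat.choose (N - 1) j : ℤ)
        = ((k : ℤ) + i) * (Nat.choose (N - 1) i : ℤ) * (D - 1)
          - ((N : ℤ) - i) * (Nat.choose (N - 1) j : ℤ) * (D - 1)
          - ((k : ℤ) * (Nat.choose (N - 1) i : ℤ) * D - ((k : ℤ) + i) * (Nat.choose N i : ℤ)) := by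
      linear_combination (-(D : ℤ)) * hR - ((k : ℤ) + i) * hP
    have hd1 : (p : ℤ) ^ a * (q : ℤ) ∣ ((k : ℤ) + i) * (Nat.choose (N - 1) i : ℤ) * (D - 1) := by
      rw [mul_comm ((p : ℤ) ^ a) (q : ℤ)]
      exact mul_dvd_mul (hqkiZ.mul_right _) h1
    have hd2 : (p : ℤ) ^ a * (q : ℤ) ∣ ((N : ℤ) - i) * (Nat.choose (N - 1) j : ℤ) * (D - 1) := by
      rw [mul_comm ((p : ℤ) ^ a) (q : ℤ)]
      exact mul_dvd_mul (hqNiZ.mul_right _) h1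
    have hd3 : (p : ℤ) ^ a * (q : ℤ) ∣
        ((k : ℤ) * (Nat.choose (N - 1) i : ℤ) * D - ((k : ℤ) + i) * (Nat.choose N i : ℤ)) :=
      dvd_trans (mul_dvd_mul_left _ hqkiZ) (h2 i hi1 hiN)
    have hdvd : (p : ℤ) ^ a * (q : ℤ) ∣ ((k : ℤ) + N) * (Nat.choose (N - 1) j : ℤ) := by
      rw [hKey]; exact dvd_sub (dvd_sub hd1 hd2) hd3
    have hdvdN : p ^ (a + (s + 1)) ∣ (k + N) * Nat.choose (N - 1) j := by
      have hqZ : (q : ℤ) = (p : ℤ) ^ (s + 1) := by rw [hq]; push_cast; ring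
      rw [hqZ, ← pow_add] at hdvd
      have hcast : ((p ^ (a + (s + 1)) : ℕ) : ℤ) ∣ (((k + N) * Nat.choose (N - 1) j : ℕ) : ℤ) := by
        push_cast
        exact hdvd
      exact_mod_cast hcast
    have hcop : Nat.Coprime (p ^ (a + (s + 1))) (Nat.choose (N - 1) j) := by
      apply Nat.Coprime.pow_left
      apply (Nat.Prime.coprime_iff_not_dvd hp).2
      rw [hjq, hq]
      exact not_dvd_choose_mod_pow hp (s + 1) (N - 1)
    exact (Nat.Coprime.dvd_of_dvd_mul_right hcop) hdvdN

/-- Let `N ≥ 2`, `k ≥ 0`, `m ≥ 1` be integers. Suppose `m` divides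
`C(k+N-1, N-1) - 1`, and for every `i` with `1 ≤ i ≤ N-1`, `m` divides
`WD((k,1,…,1,0,…,0)) - C(N,i)` (the tuple of length `N` having `i` ones after the leading
`k`). Then `m` divides `x = (k+N)/gcd(k+N, lcm(1,…,N-1))`. -/
theorem twisted_charge_order_divides_x (N k m : ℕ) (hN : 2 ≤ N) (hm : 1 ≤ m)
    (h1 : (m : ℤ) ∣ (Nat.choose (k + N - 1) (N - 1) : ℤ) - 1)
    (h2 : ∀ i, 1 ≤ i → i ≤ N - 1 →
      ∃ t : ℤ,
        weylDim N (fun j => if (j : ℕ) = 0 then (k : ℤ) else if (j : ℕ) ≤ i then 1 else 0)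
          - (Nat.choose N i : ℚ) = (m : ℚ) * (t : ℚ)) :
    m ∣ (k + N) / Nat.gcd (k + N) ((Finset.Icc 1 (N - 1)).lcm id) := by
  set n := k + N with hn
  set L := (Finset.Icc 1 (N - 1)).lcm id with hL
  have hn0 : n ≠ 0 := by omega
  have hL0 : L ≠ 0 := by
    intro h
    rw [hL, Finset.lcm_eq_zero_iff] at h
    obtain ⟨j, hj, hj0⟩ := h
    simp only [id] at hj0
    subst hj0
    rw [Finset.mem_Icc] at hj
    omega
  have hg : Nat.gcd n L ∣ n := Nat.gcd_dvd_left _ _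
  have hgn0 : Nat.gcd n L ≠ 0 := fun h => hn0 (Nat.eq_zero_of_gcd_eq_zero_left h)
  set x := n / Nat.gcd n L with hx
  have hxg : x * Nat.gcd n L = n := Nat.div_mul_cancel hg
  have hx0 : x ≠ 0 := by
    intro h; rw [h, zero_mul] at hxg; exact hn0 hxg.symm
  rw [← Nat.factorization_le_iff_dvd (by omega : m ≠ 0) hx0, Finsupp.le_def]
  intro p
  by_cases hp : p.Prime
  swap
  · simp [Nat.factorization_eq_zero_of_not_prime _ hp]
  set a := m.factorization p with haa
  rcases Nat.eq_zero_or_pos a with ha0 | ha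
  · rw [ha0]; exact Nat.zero_le _
  have hpa : (p : ℤ) ^ a ∣ (m : ℤ) := by exact_mod_cast Int.natCast_dvd_natCast.2 (Nat.ordProj_dvd m p)
  have h1' : (p : ℤ) ^ a ∣ (Nat.choose (k + N - 1) (N - 1) : ℤ) - 1 := dvd_trans hpa h1
  have h2' : ∀ i : ℕ, 1 ≤ i → i ≤ N - 1 →
      ((p : ℤ) ^ a * ((k : ℤ) + i)) ∣
        ((k : ℤ) * (Nat.choose (N - 1) i : ℤ) * (Nat.choose (k + N - 1) (N - 1) : ℤ)
          - ((k : ℤ) + i) * (Nat.choose N i : ℤ)) := by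
    intro i hi1 hiN
    obtain ⟨t, ht⟩ := h2 i hi1 hiN
    have heval := weylDim_eval N k i hN hi1 hiN
    have hqq : (k : ℚ) * (Nat.choose (N - 1) i : ℚ) * (Nat.choose (k + N - 1) (N - 1) : ℚ)
        - ((k : ℚ) + i) * (Nat.choose N i : ℚ) = ((k : ℚ) + i) * (m : ℚ) * (t : ℚ) := by
      rw [← heval]; linear_combination ((k : ℚ) + i) * ht
    have hZ : (k : ℤ) * (Nat.choose (N - 1) i : ℤ) * (Nat.choose (k + N - 1) (N - 1) : ℤ)
        - ((k : ℤ) + i) * (Nat.choose N i : ℤ) = ((k : ℤ) + i) * (m : ℤ) * t := by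
      exact_mod_cast hqq
    obtain ⟨c, hc⟩ := hpa
    exact ⟨c * t, by rw [hZ, hc]; ring⟩
  set e := L.factorization p with he
  have hpe : p ^ e ≤ N - 1 := by
    rcases Nat.eq_zero_or_pos e with he0 | he1
    · rw [he0, pow_zero]; omega
    · have hdvd : p ^ e ∣ L := Nat.ordProj_dvd L p
      obtain ⟨j, hj, hjd⟩ := exists_mem_of_pow_dvd_lcm hp he1 (Finset.Icc 1 (N - 1))
        (by rw [Finset.mem_Icc]; omega) hdvd
      rw [Finset.mem_Icc] at hj
      have hj0 : 0 < j := by omega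
      have := Nat.le_of_dvd hj0 hjd
      omega
  have hkey : p ^ (a + e) ∣ n := stepA p a N k hp hN ha h1' h2' e hpe
  have hnf : a + e ≤ n.factorization p := (hp.pow_dvd_iff_le_factorization hn0).1 hkey
  have hfac : n.factorization p = x.factorization p + (Nat.gcd n L).factorization p := by
    conv_lhs => rw [← hxg]
    rw [Nat.factorization_mul hx0 hgn0]
    simp
  have hgL : (Nat.gcd n L).factorization p ≤ e :=
    (Nat.factorization_le_iff_dvd hgn0 hL0).2 (Nat.gcd_dvd_right _ _) p
  omega
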